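/- There exist two disjoint subsets S₁ and S₂ of C₁₀, each of size 192, such that within each Sᵢ any two distinct elements have Hamming distance at least 6. In particular, the maximum size 192 of a subcode of C₁₀ with minimum distance 6 is attained. -/

import Mathlib

/-- `C₁₀`: the set of `4×4` matrices over `𝔽₂` all of whose four row sums and
four column sums are equal to one common value in `𝔽₂`. -/
def C10 : Set (Fin 4 × Fin 4 → ZMod 2) :=
  {m | ∃ s : ZMod 2, (∀ i : Fin 4, ∑ j : Fin 4, m (i, j) = s) ∧
        (∀ j : Fin 4, ∑ i : Fin 4, m (i, j) = s)}


def idx (p : Fin 4 × Fin 4) : ℕ := 4 * p.1.val + p.2.val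

def mk (n : ℕ) : Fin 4 × Fin 4 → ZMod 2 := fun p => if n.testBit (idx p) then 1 else 0

def wt (d : ℕ) : ℕ := (Finset.univ.filter (fun p : Fin 4 × Fin 4 => d.testBit (idx p))).card

lemma dist_mk (a b : ℕ) : hammingDist (mk a) (mk b) = wt (a ^^^ b) := by
  unfold hammingDist wt
  congr 1
  apply Finset.filter_congr
  intro p _
  simp only [mk, Nat.testBit_xor]
  cases ha : a.testBit (idx p) <;> cases hb : b.testBit (idx p) <;> simp [ha, hb]

def V : List Nat := [0, 255, 3855, 4080, 13107, 13260, 15420, 15555, 21845, 21930, 23130, 23205, 26214, 26265, 26985, 27030, 38505, 38550, 39270, 39321, 42330, 42405, 43605, 43690, 49980, 50115, 52275, 52428, 61455, 61680, 65280, 65535]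

def T : List Nat := [869, 1360, 1542, 4680, 5147, 6014]

def DT : List Nat := [0, 854, 869, 1334, 1379, 1589, 1619, 4397, 4427, 4472, 4637, 4654, 5147, 5198, 5912, 6014]

def L1 : List Nat := T.flatMap fun t => V.map fun v => t ^^^ v

def code (c : ℕ) : List (Fin 4 × Fin 4 → ZMod 2) := L1.map fun a => mk (c ^^^ a)

lemma xor4 (a b c d : ℕ) : (a ^^^ b) ^^^ (c ^^^ d) = (a ^^^ c) ^^^ (b ^^^ d) := by
  apply Nat.eq_of_testBit_eq
  intro i
  simp only [Nat.testBit_xor]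
  cases a.testBit i <;> cases b.testBit i <;> cases c.testBit i <;> cases d.testBit i <;> rfl

lemma cancel (c p q : ℕ) : (c ^^^ p) ^^^ (c ^^^ q) = p ^^^ q := by
  rw [xor4, Nat.xor_self, Nat.zero_xor]

lemma mk_inj {a b : ℕ} (ha : a < 65536) (hb : b < 65536) (h : mk a = mk b) : a = b := by
  apply Nat.eq_of_testBit_eq
  intro i
  by_cases hi : i < 16
  · have hp := congrFun h (⟨i / 4, by omega⟩, ⟨i % 4, by omega⟩)
    have hidx : idx (⟨i / 4, by omega⟩, ⟨i % 4, by omega⟩) = i := by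
      simp only [idx]; omega
    simp only [mk, hidx] at hp
    cases hA : a.testBit i <;> cases hB : b.testBit i <;> simp [hA, hB] at hp ⊢
  · have h2 : (65536:ℕ) ≤ 2 ^ i := by
      calc (65536:ℕ) = 2 ^ 16 := by norm_num
      _ ≤ 2 ^ i := Nat.pow_le_pow_right (by norm_num) (by omega)
    rw [Nat.testBit_lt_two_pow (lt_of_lt_of_le ha h2),
        Nat.testBit_lt_two_pow (lt_of_lt_of_le hb h2)]

lemma closV : ∀ v ∈ V, ∀ w ∈ V, v ^^^ w ∈ V := by decide

lemma closT : ∀ t ∈ T, ∀ u ∈ T, t ^^^ u ∈ DT := by decide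

set_option maxRecDepth 1000000 in
set_option maxHeartbeats 2000000 in
lemma keyDV : ∀ d ∈ DT, ∀ e ∈ V, d ^^^ e = 0 ∨ (d ^^^ e ≠ 51 ∧ 6 ≤ wt (d ^^^ e)) := by decide

set_option maxRecDepth 1000000 in
lemma bound1 : ∀ a ∈ L1, a < 65536 := by decide

set_option maxRecDepth 1000000 in
set_option maxHeartbeats 2000000 in
lemma nodup1 : L1.Nodup := by decide

set_option maxRecDepth 1000000 in
lemma len1 : L1.length = 192 := by decide

lemma decomp : ∀ a ∈ L1, ∃ t ∈ T, ∃ v ∈ V, a = t ^^^ v := by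
  intro a ha
  rw [L1, List.mem_flatMap] at ha
  obtain ⟨t, ht, hm⟩ := ha
  rw [List.mem_map] at hm
  obtain ⟨v, hv, rfl⟩ := hm
  exact ⟨t, ht, v, hv, rfl⟩

lemma lt16 {c : ℕ} (hc : c < 65536) {a : ℕ} (ha : a ∈ L1) : c ^^^ a < 65536 := by
  have e : (2:ℕ) ^ 16 = 65536 := by norm_num
  have := Nat.xor_lt_two_pow (n := 16) (by rw [e]; exact hc) (by rw [e]; exact bound1 a ha)
  rwa [e] at this

lemma code_nodup {c : ℕ} (hc : c < 65536) : (code c).Nodup := by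
  refine List.Nodup.map_on ?_ nodup1
  intro a ha b hb h
  have h2 := mk_inj (lt16 hc ha) (lt16 hc hb) h
  have h3 := congrArg (c ^^^ ·) h2
  simpa [Nat.xor_xor_cancel_left] using h3

set_option maxRecDepth 1000000 in
set_option maxHeartbeats 4000000 in
lemma memP0 : ∀ a ∈ L1, ∃ s : ZMod 2,
    (∀ i : Fin 4, ∑ j : Fin 4, mk (0 ^^^ a) (i, j) = s) ∧
    (∀ j : Fin 4, ∑ i : Fin 4, mk (0 ^^^ a) (i, j) = s) := by decide

set_option maxRecDepth 1000000 in
set_option maxHeartbeats 4000000 in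
lemma memP51 : ∀ a ∈ L1, ∃ s : ZMod 2,
    (∀ i : Fin 4, ∑ j : Fin 4, mk (51 ^^^ a) (i, j) = s) ∧
    (∀ j : Fin 4, ∑ i : Fin 4, mk (51 ^^^ a) (i, j) = s) := by decide

lemma dist_code {c : ℕ} : ∀ a ∈ L1, ∀ b ∈ L1,
    mk (c ^^^ a) ≠ mk (c ^^^ b) → 6 ≤ hammingDist (mk (c ^^^ a)) (mk (c ^^^ b)) := by
  intro a ha b hb hne
  rw [dist_mk, cancel]
  obtain ⟨t, ht, v, hv, rfl⟩ := decomp a ha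
  obtain ⟨u, hu, w, hw, rfl⟩ := decomp b hb
  rw [xor4]
  rcases keyDV _ (closT t ht u hu) _ (closV v hv w hw) with h0 | h
  · exfalso
    apply hne
    rw [xor4] at h0
    rw [Nat.xor_eq_zero_iff.mp h0]
  · exact h.2

/-- There are two disjoint subsets of `C₁₀`, each of size 192, within each of which
any two distinct elements are at Hamming distance at least 6. -/
theorem exists_two_disjoint_subcodes_C10 :
    ∃ S₁ S₂ : Finset (Fin 4 × Fin 4 → ZMod 2),
      (↑S₁ : Set (Fin 4 × Fin 4 → ZMod 2)) ⊆ C10 ∧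
      (↑S₂ : Set (Fin 4 × Fin 4 → ZMod 2)) ⊆ C10 ∧
      Disjoint S₁ S₂ ∧
      S₁.card = 192 ∧ S₂.card = 192 ∧
      (∀ x ∈ S₁, ∀ y ∈ S₁, x ≠ y → 6 ≤ hammingDist x y) ∧
      (∀ x ∈ S₂, ∀ y ∈ S₂, x ≠ y → 6 ≤ hammingDist x y) := by
  have h0 : (0:ℕ) < 65536 := by norm_num
  have h51 : (51:ℕ) < 65536 := by norm_num
  refine ⟨⟨↑(code 0), Multiset.coe_nodup.mpr (code_nodup h0)⟩,
          ⟨↑(code 51), Multiset.coe_nodup.mpr (code_nodup h51)⟩,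
          ?_, ?_, ?_, ?_, ?_, ?_, ?_⟩
  · intro x hx
    have hx' : x ∈ code 0 := by simpa using hx
    obtain ⟨a, ha, rfl⟩ := List.mem_map.mp hx'
    exact memP0 a ha
  · intro x hx
    have hx' : x ∈ code 51 := by simpa using hx
    obtain ⟨a, ha, rfl⟩ := List.mem_map.mp hx'
    exact memP51 a ha
  · rw [Finset.disjoint_left]
    intro x hx1 hx2
    have hx1' : x ∈ code 0 := by simpa using hx1
    have hx2' : x ∈ code 51 := by simpa using hx2
    obtain ⟨a, ha, rfl⟩ := List.mem_map.mp hx1'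
    obtain ⟨b, hb, hmk⟩ := List.mem_map.mp hx2'
    have h5 := mk_inj (lt16 h51 hb) (lt16 h0 ha) hmk
    rw [Nat.zero_xor] at h5
    have hab : a ^^^ b = 51 := by
      rw [← h5, Nat.xor_assoc, Nat.xor_self, Nat.xor_zero]
    obtain ⟨t, ht, v, hv, rfl⟩ := decomp a ha
    obtain ⟨u, hu, w, hw, rfl⟩ := decomp b hb
    rw [xor4] at hab
    rcases keyDV _ (closT t ht u hu) _ (closV v hv w hw) with hz | hz
    · rw [hab] at hz; exact absurd hz (by norm_num)
    · exact hz.1 hab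
  · rw [Finset.card_mk, Multiset.coe_card, code, List.length_map, len1]
  · rw [Finset.card_mk, Multiset.coe_card, code, List.length_map, len1]
  · intro x hx y hy hne
    have hx' : x ∈ code 0 := by simpa using hx
    have hy' : y ∈ code 0 := by simpa using hy
    obtain ⟨a, ha, rfl⟩ := List.mem_map.mp hx'
    obtain ⟨b, hb, rfl⟩ := List.mem_map.mp hy'
    exact dist_code a ha b hb hne
  · intro x hx y hy hne
    have hx' : x ∈ code 51 := by simpa using hx
    have hy' : y ∈ code 51 := by simpa using hy
    obtain ⟨a, ha, rfl⟩ := List.mem_map.mp hx'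
    obtain ⟨b, hb, rfl⟩ := List.mem_map.mp hy'
    exact dist_code a ha b hb hne
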